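/- For the Fermat cubic F₄ = {x₀³+⋯+x₄³=0}, every line of the form {x_i + ζx_j = 0, x_k + ξx_l = 0, x_m = 0}, where {i,j,k,l,m} = {0,1,2,3,4} and ζ³ = ξ³ = 1, lies on F₄ and is a triple line. There are exactly 135 such lines. -/

import Mathlib

set_option maxRecDepth 10000
set_option maxHeartbeats 1000000

private lemma dist5 (i j k l m : Fin 5) : ({i, j, k, l, m} : Finset (Fin 5)).card = 5 ↔
    (i ≠ j ∧ i ≠ k ∧ i ≠ l ∧ i ≠ m ∧ j ≠ k ∧ j ≠ l ∧ j ≠ m ∧ k ≠ l ∧ k ≠ m ∧ l ≠ m) := by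
  revert i j k l m; decide

private lemma swap_eq {ζ : ℂ} (hζ : ζ ^ 3 = 1) (a b : ℂ) :
    a + ζ * b = 0 ↔ b + ζ ^ 2 * a = 0 := by
  constructor
  · intro h; linear_combination ζ ^ 2 * h - b * hζ
  · intro h; linear_combination ζ * h - a * hζ

private def lineSet (i j k l m : Fin 5) (ζ ξ : ℂ) : Set (Fin 5 → ℂ) :=
  {x | x i + ζ * x j = 0 ∧ x k + ξ * x l = 0 ∧ x m = 0}

private lemma lineSet_comm (i j k l m : Fin 5) (ζ ξ : ℂ) :
    lineSet i j k l m ζ ξ = lineSet k l i j m ξ ζ := by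
  ext x; exact ⟨fun ⟨a, b, c⟩ => ⟨b, a, c⟩, fun ⟨a, b, c⟩ => ⟨b, a, c⟩⟩

private lemma pair_swap (i j : Fin 5) (hij : i ≠ j) (ζ : ℂ) (hζ : ζ ^ 3 = 1) :
    ∃ i' j' ζ', i' < j' ∧ (i' = i ∨ i' = j) ∧ (j' = i ∨ j' = j) ∧ ζ' ^ 3 = 1 ∧
      ∀ x : Fin 5 → ℂ, (x i + ζ * x j = 0 ↔ x i' + ζ' * x j' = 0) := by
  rcases lt_or_gt_of_ne hij with h | h
  · exact ⟨i, j, ζ, h, Or.inl rfl, Or.inr rfl, hζ, fun x => Iff.rfl⟩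
  · refine ⟨j, i, ζ ^ 2, h, Or.inr rfl, Or.inl rfl, ?_, fun x => swap_eq hζ _ _⟩
    calc (ζ ^ 2) ^ 3 = (ζ ^ 3) ^ 2 := by ring
    _ = 1 := by rw [hζ]; ring

private lemma normalize5 (i j k l m : Fin 5)
    (h5 : ({i, j, k, l, m} : Finset (Fin 5)).card = 5)
    (ζ ξ : ℂ) (hζ : ζ ^ 3 = 1) (hξ : ξ ^ 3 = 1) :
    ∃ i' j' k' l' ζ' ξ',
      i' < j' ∧ k' < l' ∧ i' < k' ∧ ({i', j', k', l', m} : Finset (Fin 5)).card = 5 ∧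
      ζ' ^ 3 = 1 ∧ ξ' ^ 3 = 1 ∧ lineSet i j k l m ζ ξ = lineSet i' j' k' l' m ζ' ξ' := by
  obtain ⟨hij, hik, hil, him, hjk, hjl, hjm, hkl, hkm, hlm⟩ := (dist5 i j k l m).mp h5
  obtain ⟨i1, j1, ζ1, hlt1, hpi, hpj, hζ1, hiff1⟩ := pair_swap i j hij ζ hζ
  obtain ⟨k1, l1, ξ1, hlt2, hpk, hpl, hξ1, hiff2⟩ := pair_swap k l hkl ξ hξ
  have hL : lineSet i j k l m ζ ξ = lineSet i1 j1 k1 l1 m ζ1 ξ1 := by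
    ext x
    simp only [lineSet, Set.mem_setOf_eq, hiff1 x, hiff2 x]
  have hi1m : i1 ≠ m := by rcases hpi with rfl | rfl; exacts [him, hjm]
  have hj1m : j1 ≠ m := by rcases hpj with rfl | rfl; exacts [him, hjm]
  have hk1m : k1 ≠ m := by rcases hpk with rfl | rfl; exacts [hkm, hlm]
  have hl1m : l1 ≠ m := by rcases hpl with rfl | rfl; exacts [hkm, hlm]
  have hi1k1 : i1 ≠ k1 := by
    rcases hpi with rfl | rfl <;> rcases hpk with rfl | rfl <;>
      first | exact hik | exact hil | exact hjk | exact hjl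
  have hi1l1 : i1 ≠ l1 := by
    rcases hpi with rfl | rfl <;> rcases hpl with rfl | rfl <;>
      first | exact hik | exact hil | exact hjk | exact hjl
  have hj1k1 : j1 ≠ k1 := by
    rcases hpj with rfl | rfl <;> rcases hpk with rfl | rfl <;>
      first | exact hik | exact hil | exact hjk | exact hjl
  have hj1l1 : j1 ≠ l1 := by
    rcases hpj with rfl | rfl <;> rcases hpl with rfl | rfl <;>
      first | exact hik | exact hil | exact hjk | exact hjl
  rcases lt_or_gt_of_ne hi1k1 with h | h
  · exact ⟨i1, j1, k1, l1, ζ1, ξ1, hlt1, hlt2, h,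
      (dist5 _ _ _ _ _).mpr ⟨hlt1.ne, hi1k1, hi1l1, hi1m, hj1k1, hj1l1, hj1m, hlt2.ne,
        hk1m, hl1m⟩, hζ1, hξ1, hL⟩
  · exact ⟨k1, l1, i1, j1, ξ1, ζ1, hlt2, hlt1, h,
      (dist5 _ _ _ _ _).mpr ⟨hlt2.ne, hi1k1.symm, hj1k1.symm, hk1m, hi1l1.symm, hj1l1.symm,
        hl1m, hlt1.ne, hi1m, hj1m⟩, hξ1, hζ1, hL.trans (lineSet_comm _ _ _ _ _ _ _)⟩

private lemma inj_aux (i j k l m i' j' k' l' m' : Fin 5) (ζ ξ ζ' ξ' : ℂ)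
    (hij : i < j) (hkl : k < l) (hik : i < k)
    (h5 : ({i, j, k, l, m} : Finset (Fin 5)).card = 5)
    (hij' : i' < j') (hkl' : k' < l') (hik' : i' < k')
    (h5' : ({i', j', k', l', m'} : Finset (Fin 5)).card = 5)
    (hζ : ζ ^ 3 = 1) (hξ : ξ ^ 3 = 1)
    (heq : lineSet i j k l m ζ ξ = lineSet i' j' k' l' m' ζ' ξ') :
    i' = i ∧ j' = j ∧ k' = k ∧ l' = l ∧ m' = m ∧ ζ' = ζ ∧ ξ' = ξ := by
  obtain ⟨dij, dik, dil, dim, djk, djl, djm, dkl, dkm, dlm⟩ := (dist5 _ _ _ _ _).mp h5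
  obtain ⟨dij', dik', dil', dim', djk', djl', djm', dkl', dkm', dlm'⟩ :=
    (dist5 _ _ _ _ _).mp h5'
  have hζ0 : ζ ≠ 0 := by rintro rfl; simp at hζ
  have hξ0 : ξ ≠ 0 := by rintro rfl; simp at hξ
  have hmem : ∀ n : Fin 5, n = i ∨ n = j ∨ n = k ∨ n = l ∨ n = m := by
    intro n
    have huniv : ({i, j, k, l, m} : Finset (Fin 5)) = Finset.univ :=
      Finset.eq_univ_of_card _ (by simpa using h5)
    have : n ∈ ({i, j, k, l, m} : Finset (Fin 5)) := huniv ▸ Finset.mem_univ n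
    simpa using this
  have hmem' : ∀ n : Fin 5, n = i' ∨ n = j' ∨ n = k' ∨ n = l' ∨ n = m' := by
    intro n
    have huniv : ({i', j', k', l', m'} : Finset (Fin 5)) = Finset.univ :=
      Finset.eq_univ_of_card _ (by simpa using h5')
    have : n ∈ ({i', j', k', l', m'} : Finset (Fin 5)) := huniv ▸ Finset.mem_univ n
    simpa using this
  set v1 : Fin 5 → ℂ := fun n => if n = i then -ζ else if n = j then 1 else 0 with hv1def
  set v2 : Fin 5 → ℂ := fun n => if n = k then -ξ else if n = l then 1 else 0 with hv2def
  have hv1 : v1 ∈ lineSet i j k l m ζ ξ := by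
    refine ⟨?_, ?_, ?_⟩
    · show v1 i + ζ * v1 j = 0
      simp [v1, Ne.symm dij]
    · show v1 k + ξ * v1 l = 0
      simp [v1, Ne.symm dik, Ne.symm djk, Ne.symm dil, Ne.symm djl]
    · show v1 m = 0
      simp [v1, Ne.symm dim, Ne.symm djm]
  have hv2 : v2 ∈ lineSet i j k l m ζ ξ := by
    refine ⟨?_, ?_, ?_⟩
    · show v2 i + ζ * v2 j = 0
      simp [v2, dik, djk, dil, djl]
    · show v2 k + ξ * v2 l = 0
      simp [v2, Ne.symm dkl]
    · show v2 m = 0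
      simp [v2, Ne.symm dkm, Ne.symm dlm]
  have hv1' : v1 ∈ lineSet i' j' k' l' m' ζ' ξ' := heq ▸ hv1
  have hv2' : v2 ∈ lineSet i' j' k' l' m' ζ' ξ' := heq ▸ hv2
  have hm' : m' = m := by
    rcases hmem m' with rfl | rfl | rfl | rfl | rfl
    · exfalso; have := hv1'.2.2; simp [v1] at this; exact hζ0 this
    · exfalso; have := hv1'.2.2; simp [v1, Ne.symm dij] at this
    · exfalso; have := hv2'.2.2; simp [v2] at this; exact hξ0 this
    · exfalso; have := hv2'.2.2; simp [v2, Ne.symm dkl] at this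
    · rfl
  subst hm'
  have hil4 : i < l := hik.trans hkl
  have hil4' : i' < l' := hik'.trans hkl'
  have hi' : i' = i := by
    by_contra hne
    have h1 : i < i' := by
      rcases hmem i' with h | h | h | h | h
      · exact absurd h hne
      · exact h ▸ hij
      · exact h ▸ hik
      · exact h ▸ hil4
      · exact absurd h dim'
    have h2 : i' < i := by
      rcases hmem' i with h | h | h | h | h
      · exact absurd h.symm hne
      · exact h ▸ hij'
      · exact h ▸ hik'
      · exact h ▸ hil4'
      · exact absurd h dim
    exact lt_asymm h1 h2
  subst hi'
  have hj' : j' = j := by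
    rcases hmem j' with h | h | h | h | h
    · exact absurd h.symm dij'
    · exact h
    · exfalso
      have e1 := hv1'.1
      rw [h] at e1
      simp [v1, Ne.symm dik, Ne.symm djk] at e1
      exact hζ0 e1
    · exfalso
      have e1 := hv1'.1
      rw [h] at e1
      simp [v1, Ne.symm dil, Ne.symm djl] at e1
      exact hζ0 e1
    · exact absurd h djm'
  subst hj'
  have hzeta : ζ' = ζ := by
    have e1 := hv1'.1
    simp [v1, Ne.symm dij] at e1
    linear_combination e1
  have hk' : k' = k := by
    rcases hmem k' with h | h | h | h | h
    · exact absurd h.symm dik'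
    · exact absurd h.symm djk'
    · exact h
    · exfalso
      rcases hmem l' with h2 | h2 | h2 | h2 | h2
      · exact absurd h2.symm dil'
      · exact absurd h2.symm djl'
      · rw [h, h2] at hkl'; exact lt_asymm hkl hkl'
      · rw [h, h2] at hkl'; exact lt_irrefl l hkl'
      · exact absurd h2 dlm'
    · exact absurd h dkm'
  subst hk'
  have hl' : l' = l := by
    rcases hmem l' with h | h | h | h | h
    · exact absurd h.symm dil'
    · exact absurd h.symm djl'
    · exact absurd h.symm dkl'
    · exact h
    · exact absurd h dlm'
  subst hl'
  have hxi : ξ' = ξ := by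
    have e2 := hv2'.2.1
    simp [v2, Ne.symm dkl] at e2
    linear_combination e2
  exact ⟨rfl, rfl, rfl, rfl, rfl, hzeta, hxi⟩

private def canT : Finset (Fin 5 × Fin 5 × Fin 5 × Fin 5 × Fin 5) :=
  Finset.univ.filter fun t =>
    t.1 < t.2.1 ∧ t.2.2.1 < t.2.2.2.1 ∧ t.1 < t.2.2.1 ∧
    ({t.1, t.2.1, t.2.2.1, t.2.2.2.1, t.2.2.2.2} : Finset (Fin 5)).card = 5

private lemma canT_card : canT.card = 15 := by decide




/-- Every line `{xᵢ + ζxⱼ = 0, x_k + ξx_l = 0, x_m = 0}` with `{i,j,k,l,m} = {0,…,4}`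
and `ζ³ = ξ³ = 1` lies on the Fermat cubic and is a triple line (the plane spanned by
the line and the `m`-th coordinate vector meets the Fermat cubic in `3ℓ`), and there
are exactly 135 such lines. -/
theorem fermat_135_triple_lines :
    (∀ (i j k l m : Fin 5), (({i, j, k, l, m} : Finset (Fin 5)).card = 5) →
      ∀ ζ ξ : ℂ, ζ ^ 3 = 1 → ξ ^ 3 = 1 →
      -- the parametrized plane (t,s on the line, u along the m-th coordinate)
      -- meets the Fermat cubic in the divisor 3ℓ : the cubic restricts to u³
      ∀ t s u : ℂ,
        (∑ n : Fin 5,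
          (if n = i then -ζ * t else if n = j then t else
           if n = k then -ξ * s else if n = l then s else u) ^ 3) = u ^ 3) ∧
    Set.ncard {L : Set (Fin 5 → ℂ) |
      ∃ (i j k l m : Fin 5) (ζ ξ : ℂ),
        (({i, j, k, l, m} : Finset (Fin 5)).card = 5) ∧ ζ ^ 3 = 1 ∧ ξ ^ 3 = 1 ∧
        L = {x : Fin 5 → ℂ | x i + ζ * x j = 0 ∧ x k + ξ * x l = 0 ∧ x m = 0}} = 135 := by
  constructor
  · intro i j k l m h5 ζ ξ hζ hξ t s u
    obtain ⟨hij, hik, hil, him, hjk, hjl, hjm, hkl, hkm, hlm⟩ := (dist5 i j k l m).mp h5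
    have huniv : ({i, j, k, l, m} : Finset (Fin 5)) = Finset.univ :=
      Finset.eq_univ_of_card _ (by simpa using h5)
    rw [show (Finset.univ : Finset (Fin 5)) = {i, j, k, l, m} from huniv.symm]
    rw [Finset.sum_insert (by simp [hij, hik, hil, him]),
        Finset.sum_insert (by simp [hjk, hjl, hjm]),
        Finset.sum_insert (by simp [hkl, hkm]),
        Finset.sum_insert (by simp [hlm]),
        Finset.sum_singleton]
    simp only [if_pos rfl, Ne.symm hij, Ne.symm hik, Ne.symm hil, Ne.symm him,
      Ne.symm hjk, Ne.symm hjl, Ne.symm hjm, Ne.symm hkl, Ne.symm hkm, Ne.symm hlm,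
      ite_false, ite_true, if_neg, reduceIte]
    linear_combination (-t ^ 3) * hζ + (-s ^ 3) * hξ
  · have hS : {L : Set (Fin 5 → ℂ) |
        ∃ (i j k l m : Fin 5) (ζ ξ : ℂ),
          (({i, j, k, l, m} : Finset (Fin 5)).card = 5) ∧ ζ ^ 3 = 1 ∧ ξ ^ 3 = 1 ∧
          L = {x : Fin 5 → ℂ | x i + ζ * x j = 0 ∧ x k + ξ * x l = 0 ∧ x m = 0}} =
        (fun p : (Fin 5 × Fin 5 × Fin 5 × Fin 5 × Fin 5) × ℂ × ℂ =>
          lineSet p.1.1 p.1.2.1 p.1.2.2.1 p.1.2.2.2.1 p.1.2.2.2.2 p.2.1 p.2.2) ''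
          ↑(canT ×ˢ Polynomial.nthRootsFinset 3 (1 : ℂ) ×ˢ Polynomial.nthRootsFinset 3 (1 : ℂ)) := by
      ext L
      constructor
      · rintro ⟨i, j, k, l, m, ζ, ξ, h5, hζ, hξ, rfl⟩
        obtain ⟨i', j', k', l', ζ', ξ', h1, h2, h3, h4, hζ', hξ', hEq⟩ :=
          normalize5 i j k l m h5 ζ ξ hζ hξ
        refine ⟨((i', j', k', l', m), ζ', ξ'), ?_, ?_⟩
        · simp only [Finset.coe_product, Set.mem_prod, Finset.mem_coe]
          refine ⟨?_, ?_, ?_⟩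
          · simp only [canT, Finset.mem_filter, Finset.mem_univ, true_and]
            exact ⟨h1, h2, h3, h4⟩
          · exact (Polynomial.mem_nthRootsFinset (by norm_num) 1).mpr hζ'
          · exact (Polynomial.mem_nthRootsFinset (by norm_num) 1).mpr hξ'
        · exact hEq.symm
      · rintro ⟨⟨⟨i, j, k, l, m⟩, ζ, ξ⟩, hp, rfl⟩
        simp only [Finset.coe_product, Set.mem_prod, Finset.mem_coe, canT,
          Finset.mem_filter, Finset.mem_univ, true_and] at hp
        obtain ⟨⟨h1, h2, h3, h4⟩, hζ, hξ⟩ := hp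
        exact ⟨i, j, k, l, m, ζ, ξ, h4,
          (Polynomial.mem_nthRootsFinset (by norm_num) 1).mp hζ,
          (Polynomial.mem_nthRootsFinset (by norm_num) 1).mp hξ, rfl⟩
    rw [hS]
    have hinj : Set.InjOn
        (fun p : (Fin 5 × Fin 5 × Fin 5 × Fin 5 × Fin 5) × ℂ × ℂ =>
          lineSet p.1.1 p.1.2.1 p.1.2.2.1 p.1.2.2.2.1 p.1.2.2.2.2 p.2.1 p.2.2)
        ↑(canT ×ˢ Polynomial.nthRootsFinset 3 (1 : ℂ) ×ˢ Polynomial.nthRootsFinset 3 (1 : ℂ)) := by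
      rintro ⟨⟨i, j, k, l, m⟩, ζ, ξ⟩ hp ⟨⟨i', j', k', l', m'⟩, ζ', ξ'⟩ hq hfe
      simp only [Finset.coe_product, Set.mem_prod, Finset.mem_coe, canT,
        Finset.mem_filter, Finset.mem_univ, true_and] at hp hq
      obtain ⟨⟨p1, p2, p3, p4⟩, pζ, pξ⟩ := hp
      obtain ⟨⟨q1, q2, q3, q4⟩, qζ, qξ⟩ := hq
      obtain ⟨e1, e2, e3, e4, e5, e6, e7⟩ := inj_aux i j k l m i' j' k' l' m' ζ ξ ζ' ξ'
        p1 p2 p3 p4 q1 q2 q3 q4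
        ((Polynomial.mem_nthRootsFinset (by norm_num) 1).mp pζ)
        ((Polynomial.mem_nthRootsFinset (by norm_num) 1).mp pξ) hfe
      simp only [Prod.mk.injEq]
      exact ⟨⟨e1.symm, e2.symm, e3.symm, e4.symm, e5.symm⟩, e6.symm, e7.symm⟩
    rw [Set.ncard_image_of_injOn hinj, Set.ncard_coe_finset]
    rw [Finset.card_product, Finset.card_product, canT_card,
      (Complex.isPrimitiveRoot_exp 3 (by norm_num)).card_nthRootsFinset]
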